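/- Let T be an infinite rooted tree. If ψ : T → ℂ satisfies ‖ψf‖_n = ‖f‖_m for all f ∈ L^(m) (any natural numbers m, n), then ψ is a unimodular constant: ψ'(v) = 0 for all v ≠ o and |ψ(o)| = 1. -/

import Mathlib

open Real Filter

/-- Iterated logarithm: ℓ₀(x) = x, ℓ_{j+1}(x) = 1 + log ℓ_j(x). -/
noncomputable def ell : ℕ → ℝ → ℝ
  | 0, x => x
  | j + 1, x => 1 + Real.log (ell j x)

/-- Λ_k(x) = ∏_{j=0}^{k-1} ℓ_j(x). -/
noncomputable def Lam (k : ℕ) (x : ℝ) : ℝ := ∏ j ∈ Finset.range k, ell j x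

/-- Discrete derivative of f on a rooted tree given by a parent map:
`f v - f (parent v)` (automatically 0 at the root since `parent o = o`). -/
def Der {V : Type*} (parent : V → V) (f : V → ℂ) (v : V) : ℂ := f v - f (parent v)

/-- The set of values |f'(v)|·Λ_k(|v|) over v ≠ o; f ∈ L^(k) iff this set is bounded above. -/
def lipSet {V : Type*} (o : V) (parent : V → V) (depth : V → ℕ) (k : ℕ) (f : V → ℂ) : Set ℝ :=
  {r | ∃ v, v ≠ o ∧ r = ‖Der parent f v‖ * Lam k (depth v)}

/-- ‖f‖_k = |f(o)| + sup_{v ≠ o} |f'(v)|·Λ_k(|v|). -/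
noncomputable def lipNorm {V : Type*} (o : V) (parent : V → V) (depth : V → ℕ) (k : ℕ)
    (f : V → ℂ) : ℝ :=
  ‖f o‖ + sSup (lipSet o parent depth k f)

lemma ell_ge_one (j : ℕ) {x : ℝ} (hx : 1 ≤ x) : 1 ≤ ell j x := by
  induction j with
  | zero => exact hx
  | succ j ih => simpa [ell] using Real.log_nonneg ih

lemma Lam_ge_one (k : ℕ) {x : ℝ} (hx : 1 ≤ x) : 1 ≤ Lam k x := by
  unfold Lam
  induction k with
  | zero => simp
  | succ k ih =>
    rw [Finset.prod_range_succ]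
    nlinarith [ell_ge_one k hx]

open Classical in
/-- The function `c·χ_o`. -/
noncomputable def pointFun {V : Type*} (o : V) (c : ℂ) : V → ℂ :=
  fun v => if v = o then c else 0

lemma pointFun_self {V : Type*} (o : V) (c : ℂ) : pointFun o c o = c := by
  simp [pointFun]

lemma pointFun_ne {V : Type*} (o : V) (c : ℂ) {v : V} (hv : v ≠ o) :
    pointFun o c v = 0 := by
  simp [pointFun, hv]

lemma ell_one (j : ℕ) : ell j 1 = 1 := by
  induction j with
  | zero => rfl
  | succ j ih => simp [ell, ih]

lemma Lam_one (k : ℕ) : Lam k 1 = 1 := by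
  simp [Lam, ell_one]

/-- Norm computation for the function `c·χ_o`. -/
lemma point_norm {V : Type*} (o : V) (parent : V → V) (depth : V → ℕ)
    (hdepth0 : depth o = 0)
    (hdepth : ∀ v, v ≠ o → depth v = depth (parent v) + 1)
    (hchild : ∀ v, ∃ w, w ≠ o ∧ parent w = v)
    (c : ℂ) (k : ℕ) :
    BddAbove (lipSet o parent depth k (pointFun o c)) ∧
    lipNorm o parent depth k (pointFun o c) = 2 * ‖c‖ := by
  classical
  obtain ⟨w, hw, hwo⟩ := hchild o
  have hdw : depth w = 1 := by rw [hdepth w hw, hwo, hdepth0]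
  have hmem : ‖c‖
      ∈ lipSet o parent depth k (pointFun o c) := by
    refine ⟨w, hw, ?_⟩
    simp [Der, pointFun_ne o c hw, hwo, pointFun_self, hdw, Lam_one]
  have hub : ∀ r ∈ lipSet o parent depth k (pointFun o c),
      r ≤ ‖c‖ := by
    rintro r ⟨v, hv, rfl⟩
    by_cases hp : parent v = o
    · have hdv : depth v = 1 := by rw [hdepth v hv, hp, hdepth0]
      simp [Der, pointFun_ne o c hv, hp, pointFun_self, hdv, Lam_one]
    · simp [Der, pointFun_ne o c hv, pointFun_ne o c hp]
  have hbdd : BddAbove (lipSet o parent depth k (pointFun o c)) :=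
    ⟨‖c‖, fun r hr => hub r hr⟩
  have hsup : sSup (lipSet o parent depth k (pointFun o c))
      = ‖c‖ :=
    le_antisymm (csSup_le ⟨_, hmem⟩ hub) (le_csSup hbdd hmem)
  refine ⟨hbdd, ?_⟩
  simp only [lipNorm, hsup, pointFun_self]
  ring

/-- If M_ψ : L^(m) → L^(n) is an isometry then ψ is a unimodular constant:
ψ'(v) = 0 for all v ≠ o and |ψ(o)| = 1. -/
theorem isometry_implies_unimodular {V : Type*} (o : V) (parent : V → V) (depth : V → ℕ)
    (hpar : parent o = o) (hdepth0 : depth o = 0)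
    (hdepth : ∀ v, v ≠ o → depth v = depth (parent v) + 1)
    (hchild : ∀ v, ∃ w, w ≠ o ∧ parent w = v)
    (ψ : V → ℂ) (m n : ℕ)
    (hiso : ∀ f : V → ℂ, BddAbove (lipSet o parent depth m f) →
      BddAbove (lipSet o parent depth n (fun v => ψ v * f v)) ∧
      lipNorm o parent depth n (fun v => ψ v * f v) = lipNorm o parent depth m f) :
    (∀ v, v ≠ o → Der parent ψ v = 0) ∧ ‖ψ o‖ = 1 := by
  classical
  obtain ⟨w, hw, hwo⟩ := hchild o
  -- Step 1: the constant function 1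
  have hzero_mem : (0 : ℝ) ∈ lipSet o parent depth m (fun _ => (1 : ℂ)) :=
    ⟨w, hw, by simp [Der]⟩
  have hbdd1 : BddAbove (lipSet o parent depth m (fun _ => (1 : ℂ))) := by
    refine ⟨0, ?_⟩
    rintro r ⟨v, hv, rfl⟩
    simp [Der]
  have hnorm1 : lipNorm o parent depth m (fun _ => (1 : ℂ)) = 1 := by
    have hsup : sSup (lipSet o parent depth m (fun _ => (1 : ℂ))) = 0 :=
      le_antisymm (csSup_le ⟨_, hzero_mem⟩ (by rintro r ⟨v, hv, rfl⟩; simp [Der]))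
        (le_csSup hbdd1 hzero_mem)
    simp [lipNorm, hsup]
  obtain ⟨hbddψ, hnψ⟩ := hiso (fun _ => (1 : ℂ)) hbdd1
  simp only [mul_one] at hbddψ hnψ
  rw [hnorm1] at hnψ
  -- Step 2: the point function (1/2)·χ_o
  obtain ⟨hbddg, hnormg⟩ :=
    point_norm o parent depth hdepth0 hdepth hchild ((1 : ℂ)/2) m
  obtain ⟨_, hng⟩ := hiso _ hbddg
  rw [hnormg] at hng
  have hrw : (fun v => ψ v * pointFun o ((1 : ℂ)/2) v)
      = pointFun o (ψ o * (1/2)) := by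
    funext v
    by_cases hv : v = o
    · subst hv; simp [pointFun_self]
    · simp [pointFun_ne _ _ hv]
  rw [hrw, (point_norm o parent depth hdepth0 hdepth hchild (ψ o * (1/2)) n).2] at hng
  have habs : ‖ψ o‖ = 1 := by
    have h2 : ‖(1 : ℂ)/2‖ = 1/2 := by
      rw [norm_div]; simp
    rw [norm_mul, h2] at hng
    nlinarith [hng, norm_nonneg (ψ o)]
  refine ⟨?_, habs⟩
  -- Step 3: sup of lipSet n ψ is zero
  have hsup0 : sSup (lipSet o parent depth n ψ) = 0 := by
    have := hnψ
    simp only [lipNorm, habs] at this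
    linarith
  intro v hv
  have hdv : (1 : ℝ) ≤ (depth v : ℝ) := by
    rw [hdepth v hv]
    push_cast
    linarith [Nat.cast_nonneg (α := ℝ) (depth (parent v))]
  have hΛ : (1 : ℝ) ≤ Lam n (depth v) := Lam_ge_one n hdv
  have hmemv : ‖Der parent ψ v‖ * Lam n (depth v)
      ∈ lipSet o parent depth n ψ := ⟨v, hv, rfl⟩
  have hle : ‖Der parent ψ v‖ * Lam n (depth v) ≤ 0 :=
    hsup0 ▸ le_csSup hbddψ hmemv
  have hge : 0 ≤ ‖Der parent ψ v‖ * Lam n (depth v) :=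
    mul_nonneg (norm_nonneg _) (by linarith)
  have h0 : ‖Der parent ψ v‖ = 0 := by
    nlinarith [norm_nonneg (Der parent ψ v)]
  exact norm_eq_zero.mp h0
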